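/- Let N be an abelian group, regarded as a discrete topological group. The canonical homomorphism (C(X,ℤ)/ℤ) ⊗_ℤ N → C(X,N)/N, induced by sending f ⊗ a to the class of the continuous function x ↦ f(x)·a, is an isomorphism of abelian groups, where in both quotients ℤ and N are embedded as the constant functions. (This is the statement that the natural map v(ℤ) ⊗_ℤ N → v(N) is an isomorphism for discrete N, applied to X a Grassmannian.) -/

import Mathlib

open TensorProduct

instance discrete_topologicalAddGroup (B : Type*) [AddGroup B] [TopologicalSpace B]
    [DiscreteTopology B] : IsTopologicalAddGroup B where
  continuous_add := continuous_of_discreteTopology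
  continuous_neg := continuous_of_discreteTopology

instance discrete_continuousConstSMul (R B : Type*) [TopologicalSpace B] [DiscreteTopology B]
    [SMul R B] : ContinuousConstSMul R B :=
  ⟨fun _ => continuous_of_discreteTopology⟩

/-- The canonical bilinear pairing `C(X,ℤ) × B → C(X,B)`, `(f, b) ↦ (x ↦ f(x)·b)`,
for `B` a discrete abelian group. -/
noncomputable def smulPairing (X : Type*) [TopologicalSpace X]
    (B : Type*) [AddCommGroup B] [TopologicalSpace B] [DiscreteTopology B] :
    C(X, ℤ) →ₗ[ℤ] B →ₗ[ℤ] C(X, B) :=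
  LinearMap.mk₂ ℤ
    (fun f b => ⟨fun x => f x • b,
      (continuous_of_discreteTopology (f := fun k : ℤ => k • b)).comp f.continuous⟩)
    (fun f g b => ContinuousMap.ext fun x => by
      show (f x + g x) • b = f x • b + g x • b
      rw [add_smul])
    (fun c f b => ContinuousMap.ext fun x => by
      show (c * f x) • b = c • (f x • b)
      rw [mul_smul])
    (fun f b b' => ContinuousMap.ext fun x => by
      show f x • (b + b') = f x • b + f x • b'
      rw [smul_add])
    (fun c f b => ContinuousMap.ext fun x => by
      show f x • (c • b) = c • (f x • b)
      rw [smul_comm])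

/-- The submodule of constant functions in `C(X,B)`. -/
def constantMaps (X : Type*) [TopologicalSpace X]
    (B : Type*) [AddCommGroup B] [TopologicalSpace B] [ContinuousAdd B]
    [ContinuousConstSMul ℤ B] : Submodule ℤ C(X, B) where
  carrier := {f | ∃ b : B, ∀ x : X, f x = b}
  add_mem' := by
    rintro f g ⟨b, hb⟩ ⟨c, hc⟩
    exact ⟨b + c, fun x => by show f x + g x = b + c; rw [hb x, hc x]⟩
  zero_mem' := ⟨0, fun _ => rfl⟩
  smul_mem' := by
    rintro k f ⟨b, hb⟩
    exact ⟨k • b, fun x => by show k • f x = k • b; rw [hb x]⟩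

/-- The canonical homomorphism `(C(X,ℤ)/ℤ) ⊗_ℤ N → C(X,N)/N` induced by
`f ⊗ a ↦ (x ↦ f(x)·a)`, where constants are divided out on both sides. -/
noncomputable def canonQuotTensorMap (X : Type*) [TopologicalSpace X]
    (N : Type*) [AddCommGroup N] [TopologicalSpace N] [DiscreteTopology N] :
    ((C(X, ℤ) ⧸ constantMaps X ℤ) ⊗[ℤ] N) →ₗ[ℤ] (C(X, N) ⧸ constantMaps X N) :=
  TensorProduct.lift (Submodule.liftQ (constantMaps X ℤ)
    ((smulPairing X N).compr₂ (constantMaps X N).mkQ)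
    (by
      rintro f ⟨c, hc⟩
      rw [LinearMap.mem_ker]
      apply LinearMap.ext
      intro b
      show Submodule.Quotient.mk (smulPairing X N f b) = 0
      rw [Submodule.Quotient.mk_eq_zero]
      exact ⟨c • b, fun x => by show f x • b = c • b; rw [hc x]⟩))

section Key
variable {X : Type*} [TopologicalSpace X] [CompactSpace X]
  {N : Type*} [AddCommGroup N] [TopologicalSpace N] [DiscreteTopology N]

lemma smulPairing_apply (f : C(X, ℤ)) (b : N) (x : X) :
    smulPairing X N f b x = f x • b := rfl

lemma key_repr (s : C(X, ℤ) ⊗[ℤ] N)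
    (hs : TensorProduct.lift (smulPairing X N) s = 0) : s = 0 := by
  obtain ⟨S, rfl⟩ := TensorProduct.exists_finset s
  classical
  let e : C(X, ({p : C(X, ℤ) × N // p ∈ S} → ℤ)) :=
    ⟨fun x p => p.1.1 x, continuous_pi fun p => p.1.1.continuous⟩
  have hfin : (Set.range e).Finite :=
    (isCompact_range e.continuous).finite_of_discrete
  set T : Finset ({p : C(X, ℤ) × N // p ∈ S} → ℤ) := hfin.toFinset with hT
  let χ : ({p : C(X, ℤ) × N // p ∈ S} → ℤ) → C(X, ℤ) := fun v =>
    (⟨fun w => if w = v then 1 else 0, continuous_of_discreteTopology⟩ :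
      C(({p : C(X, ℤ) × N // p ∈ S} → ℤ), ℤ)).comp e
  have hmem : ∀ x : X, e x ∈ T := fun x => hfin.mem_toFinset.2 ⟨x, rfl⟩
  have step1 : ∀ p : {p : C(X, ℤ) × N // p ∈ S},
      (p.1.1 : C(X, ℤ)) = ∑ v ∈ T, v p • χ v := by
    intro p
    ext x
    have : (∑ v ∈ T, v p • χ v) x = ∑ v ∈ T, if e x = v then v p else 0 := by
      rw [ContinuousMap.coe_sum, Finset.sum_apply]
      refine Finset.sum_congr rfl fun v _ => ?_
      show v p • (if e x = v then (1:ℤ) else 0) = _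
      simp [smul_ite]
    rw [this, Finset.sum_ite_eq T (e x) (fun v => v p), if_pos (hmem x)]
    rfl
  have step3 : ∀ v ∈ T, (∑ p ∈ S.attach, v p • p.1.2) = 0 := by
    intro v hv
    obtain ⟨x, rfl⟩ := hfin.mem_toFinset.1 hv
    have hx := ContinuousMap.congr_fun hs x
    rw [map_sum] at hx
    simp only [TensorProduct.lift.tmul] at hx
    rw [← Finset.sum_attach S (fun p => smulPairing X N p.1 p.2)] at hx
    show (∑ p ∈ S.attach, p.1.1 x • p.1.2) = 0
    simpa [ContinuousMap.coe_sum, Finset.sum_apply, smulPairing_apply] using hx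
  calc (∑ p ∈ S, p.1 ⊗ₜ[ℤ] p.2)
      = ∑ p ∈ S.attach, p.1.1 ⊗ₜ[ℤ] p.1.2 :=
        (Finset.sum_attach S (fun p => p.1 ⊗ₜ[ℤ] p.2)).symm
    _ = ∑ p ∈ S.attach, (∑ v ∈ T, v p • χ v) ⊗ₜ[ℤ] p.1.2 := by
        refine Finset.sum_congr rfl fun p _ => ?_
        rw [← step1 p]
    _ = ∑ p ∈ S.attach, ∑ v ∈ T, χ v ⊗ₜ[ℤ] (v p • p.1.2) := by
        refine Finset.sum_congr rfl fun p _ => ?_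
        rw [TensorProduct.sum_tmul]
        refine Finset.sum_congr rfl fun v _ => ?_
        rw [TensorProduct.smul_tmul]
    _ = ∑ v ∈ T, χ v ⊗ₜ[ℤ] (∑ p ∈ S.attach, v p • p.1.2) := by
        rw [Finset.sum_comm]
        refine Finset.sum_congr rfl fun v _ => ?_
        rw [TensorProduct.tmul_sum]
    _ = 0 := by
        refine Finset.sum_eq_zero fun v hv => ?_
        rw [step3 v hv, TensorProduct.tmul_zero]

lemma philift_surjective (g : C(X, N)) :
    ∃ s : C(X, ℤ) ⊗[ℤ] N, TensorProduct.lift (smulPairing X N) s = g := by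
  classical
  have hfin : (Set.range g).Finite := (isCompact_range g.continuous).finite_of_discrete
  set T : Finset N := hfin.toFinset with hT
  let χ : N → C(X, ℤ) := fun b =>
    (⟨fun w => if w = b then 1 else 0, continuous_of_discreteTopology⟩ : C(N, ℤ)).comp g
  refine ⟨∑ b ∈ T, χ b ⊗ₜ[ℤ] b, ?_⟩
  ext x
  rw [map_sum]
  simp only [TensorProduct.lift.tmul]
  rw [ContinuousMap.coe_sum, Finset.sum_apply]
  have : ∀ b ∈ T, smulPairing X N (χ b) b x = if g x = b then b else 0 := by
    intro b _
    show (if g x = b then (1:ℤ) else 0) • b = _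
    simp [ite_smul]
  rw [Finset.sum_congr rfl this, Finset.sum_ite_eq T (g x) (fun b => b),
    if_pos (hfin.mem_toFinset.2 ⟨x, rfl⟩)]

end Key


section Main
variable (X : Type*) [TopologicalSpace X] [CompactSpace X]
  (N : Type*) [AddCommGroup N] [TopologicalSpace N] [DiscreteTopology N]

lemma canonQuotTensorMap_comm (s : C(X, ℤ) ⊗[ℤ] N) :
    canonQuotTensorMap X N (((constantMaps X ℤ).mkQ.rTensor N) s)
      = (constantMaps X N).mkQ (TensorProduct.lift (smulPairing X N) s) := by
  induction s using TensorProduct.induction_on with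
  | zero => simp
  | tmul f n =>
      simp only [LinearMap.rTensor_tmul, TensorProduct.lift.tmul, canonQuotTensorMap,
        Submodule.mkQ_apply, Submodule.liftQ_apply, LinearMap.compr₂_apply]
      rfl
  | add a b ha hb => simp [map_add, ha, hb]

theorem canonQuotTensorMap_bijective' :
    Function.Bijective (canonQuotTensorMap X N) := by
  constructor
  · rw [injective_iff_map_eq_zero]
    intro t ht
    obtain ⟨s, rfl⟩ := LinearMap.rTensor_surjective N
      (Submodule.mkQ_surjective (constantMaps X ℤ)) t
    rw [canonQuotTensorMap_comm] at ht
    rw [Submodule.mkQ_apply, Submodule.Quotient.mk_eq_zero] at ht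
    obtain ⟨c, hc⟩ := ht
    have h0 : TensorProduct.lift (smulPairing X N)
        (s - (⟨fun _ => (1:ℤ), continuous_const⟩ : C(X, ℤ)) ⊗ₜ[ℤ] c) = 0 := by
      rw [map_sub, TensorProduct.lift.tmul]
      ext x
      simp only [ContinuousMap.sub_apply, ContinuousMap.zero_apply, smulPairing_apply]
      rw [hc x]
      show c - (1:ℤ) • c = 0
      rw [one_smul, sub_self]
    have hrep := key_repr _ h0
    rw [sub_eq_zero] at hrep
    rw [hrep, LinearMap.rTensor_tmul]
    have : (constantMaps X ℤ).mkQ (⟨fun _ => (1:ℤ), continuous_const⟩ : C(X, ℤ)) = 0 := by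
      rw [Submodule.mkQ_apply, Submodule.Quotient.mk_eq_zero]
      exact ⟨1, fun _ => rfl⟩
    rw [this, TensorProduct.zero_tmul]
  · intro t
    obtain ⟨g, rfl⟩ := Submodule.mkQ_surjective (constantMaps X N) t
    obtain ⟨s, hs⟩ := philift_surjective g
    exact ⟨(constantMaps X ℤ).mkQ.rTensor N s, by rw [canonQuotTensorMap_comm, hs]⟩

end Main

/-- For `X` a compact Hausdorff totally disconnected space and `N` an
abelian group with the discrete topology, the canonical homomorphism
`(C(X,ℤ)/ℤ) ⊗_ℤ N → C(X,N)/N` is an isomorphism of abelian groups: the natural map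
`v(ℤ) ⊗_ℤ N → v(N)` is an isomorphism for discrete `N`. -/
theorem canonQuotTensorMap_bijective
    (X : Type*) [TopologicalSpace X] [CompactSpace X] [T2Space X]
    [TotallyDisconnectedSpace X]
    (N : Type*) [AddCommGroup N] [TopologicalSpace N] [DiscreteTopology N] :
    Function.Bijective (canonQuotTensorMap X N) := by
  exact canonQuotTensorMap_bijective' X N
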